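/- Let Σ be a finite alphabet and let L ⊆ Σ* be any language. Then L contains an infinite antichain for the prefix relation if and only if there exists an antichain branch for L, that is, an infinite word α : ℕ → Σ such that for every finite prefix u of α there exists a word v ∈ Σ* with u·v ∈ L and u·v not a finite prefix of α. -/

import Mathlib

/-- The finite prefix of length `n` of the infinite word `α`. -/
def finPrefix {A : Type*} (α : ℕ → A) (n : ℕ) : List A :=
  (List.range n).map α

namespace AntichainAux

variable {A : Type*}

lemma finPrefix_length (α : ℕ → A) (n : ℕ) : (finPrefix α n).length = n := by
  simp [finPrefix]

lemma finPrefix_get? (α : ℕ → A) {n d : ℕ} (h : d < n) :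
    (finPrefix α n)[d]? = some (α d) := by
  simp [finPrefix, List.getElem?_map, List.getElem?_range, h]

lemma finPrefix_succ (α : ℕ → A) (n : ℕ) :
    finPrefix α (n+1) = finPrefix α n ++ [α n] := by
  simp [finPrefix, List.range_succ]

lemma finPrefix_prefix (α : ℕ → A) {m n : ℕ} (h : m ≤ n) :
    finPrefix α m <+: finPrefix α n := by
  have : finPrefix α m = (finPrefix α n).take m := by
    rw [finPrefix, finPrefix, ← List.map_take, List.take_range, min_eq_left h]
  rw [this]
  exact List.take_prefix m _

lemma prefix_get? {u v : List A} (h : u <+: v) {d : ℕ} (hd : d < u.length) :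
    v[d]? = u[d]? := by
  obtain ⟨t, rfl⟩ := h
  rw [List.getElem?_append_left hd]

end AntichainAux

open AntichainAux in
theorem infinite_prefix_antichain_iff_antichain_branch
    {A : Type*} [Fintype A] (L : Set (List A)) :
    (∃ S : Set (List A), S ⊆ L ∧ S.Infinite ∧
      ∀ u ∈ S, ∀ v ∈ S, u ≠ v → ¬ u <+: v ∧ ¬ v <+: u)
    ↔
    (∃ α : ℕ → A, ∀ n : ℕ, ∃ v : List A,
      finPrefix α n ++ v ∈ L ∧ ∀ m : ℕ, finPrefix α n ++ v ≠ finPrefix α m) := by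
  classical
  constructor
  · rintro ⟨S, hSL, hSinf, hSac⟩
    -- A is nonempty
    have hAne : Nonempty A := by
      obtain ⟨x, hxS, hx⟩ := ((hSinf.diff (Set.finite_singleton [])).nonempty :
        (S \ {([] : List A)}).Nonempty)
      cases x with
      | nil => simp at hx
      | cons a t => exact ⟨a⟩
    inhabit A
    set P : List A → Prop := fun u => {w | w ∈ S ∧ u <+: w}.Infinite with hP
    have hstep : ∀ u, P u → ∃ a, P (u ++ [a]) := by
      intro u hu
      by_contra hc
      push_neg at hc
      simp only [hP, Set.not_infinite] at hc
      have hsub : {w | w ∈ S ∧ u <+: w} ⊆ insert u (⋃ a : A, {w | w ∈ S ∧ u ++ [a] <+: w}) := by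
        rintro w ⟨hwS, t, rfl⟩
        cases t with
        | nil => simp
        | cons a t =>
          refine Set.mem_insert_of_mem _ (Set.mem_iUnion.2 ⟨a, hwS, t, ?_⟩)
          simp
      exact hu (Set.Finite.subset ((Set.finite_iUnion hc).insert u) hsub)
    set ext : List A → A := fun u => if h : P u then Classical.choose (hstep u h) else default
      with hext_def
    have hext : ∀ u, P u → P (u ++ [ext u]) := by
      intro u h
      simp only [hext_def, dif_pos h]
      exact Classical.choose_spec (hstep u h)
    -- the branch
    set g : ℕ → List A := fun n => Nat.rec [] (fun _ u => u ++ [ext u]) n with hg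
    have hg0 : g 0 = [] := rfl
    have hgs : ∀ n, g (n + 1) = g n ++ [ext (g n)] := fun n => rfl
    have hPg : ∀ n, P (g n) := by
      intro n
      induction n with
      | zero =>
        rw [hg0, hP]
        simp only [List.nil_prefix, and_true]
        exact hSinf
      | succ n ih => rw [hgs]; exact hext _ ih
    set α : ℕ → A := fun n => ext (g n) with hα
    have hfg : ∀ n, finPrefix α n = g n := by
      intro n
      induction n with
      | zero => rfl
      | succ n ih => rw [finPrefix_succ, hgs, ih]
    refine ⟨α, fun n => ?_⟩
    -- at most one element of S is a finite prefix of α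
    have hsub : (S ∩ {w | ∃ m, w = finPrefix α m}).Subsingleton := by
      rintro x ⟨hxS, m, rfl⟩ y ⟨hyS, m', rfl⟩
      by_contra hne
      rcases le_total m m' with h | h
      · exact (hSac _ hxS _ hyS hne).1 (finPrefix_prefix α h)
      · exact (hSac _ hxS _ hyS hne).2 (finPrefix_prefix α h)
    have hinf : ({w | w ∈ S ∧ g n <+: w} \ (S ∩ {w | ∃ m, w = finPrefix α m})).Infinite :=
      (hPg n).diff hsub.finite
    obtain ⟨x, ⟨⟨hxS, t, hxt⟩, hxnp⟩⟩ := hinf.nonempty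
    refine ⟨t, ?_, ?_⟩
    · rw [hfg, hxt]; exact hSL hxS
    · intro m hm
      exact hxnp ⟨hxS, m, by rw [← hm, hfg, hxt]⟩
  · rintro ⟨α, hα⟩
    choose v hvL hvne using hα
    set w : ℕ → List A := fun n => finPrefix α n ++ v n with hw
    have hpre : ∀ n, finPrefix α n <+: w n := fun n => ⟨v n, rfl⟩
    have hlen : ∀ n, n ≤ (w n).length := by
      intro n
      have := (hpre n).length_le
      rwa [finPrefix_length] at this
    have hd : ∀ n, ∃ d, d < (w n).length ∧ (w n)[d]? ≠ some (α d) := by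
      intro n
      by_contra hc
      push_neg at hc
      apply hvne n ((w n).length)
      apply List.ext_getElem?
      intro d
      by_cases hdl : d < (w n).length
      · rw [hc d hdl, finPrefix_get? α (by rwa [] : d < (w n).length)]
      · rw [List.getElem?_eq_none_iff.2 (le_of_not_gt hdl),
          List.getElem?_eq_none_iff.2 (by rw [finPrefix_length]; exact le_of_not_gt hdl)]
    choose d hdlt hdne using hd
    have hdge : ∀ n, n ≤ d n := by
      intro n
      by_contra hlt
      push_neg at hlt
      apply hdne n
      rw [prefix_get? (hpre n) (by rw [finPrefix_length]; exact hlt)]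
      exact finPrefix_get? α hlt
    have hinc : ∀ n k, d n < k → ¬ w n <+: w k ∧ ¬ w k <+: w n := by
      intro n k hk
      have h1 : (w k)[d n]? = some (α (d n)) := by
        rw [prefix_get? (hpre k) (by rw [finPrefix_length]; exact hk)]
        exact finPrefix_get? α hk
      constructor
      · intro hp
        exact hdne n (by rw [← prefix_get? hp (hdlt n)]; exact h1)
      · intro hp
        apply hdne n
        rw [prefix_get? hp (lt_of_lt_of_le hk (hlen k))]
        exact h1
    set N : ℕ → ℕ := fun k => Nat.rec 0 (fun _ m => d m + 1) k with hN
    have hNs : ∀ k, N (k + 1) = d (N k) + 1 := fun k => rfl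
    have hNmono : StrictMono N := by
      apply strictMono_nat_of_lt_succ
      intro k
      rw [hNs]
      exact lt_of_le_of_lt (hdge (N k)) (Nat.lt_succ_self _)
    have hkey : ∀ i j, i < j → ¬ w (N i) <+: w (N j) ∧ ¬ w (N j) <+: w (N i) := by
      intro i j hij
      apply hinc
      calc d (N i) < N (i + 1) := by rw [hNs]; exact Nat.lt_succ_self _
        _ ≤ N j := hNmono.le_iff_le.2 hij
    have hne : ∀ i j, i ≠ j → w (N i) ≠ w (N j) := by
      intro i j hij heq
      rcases hij.lt_or_gt with h | h
      · exact (hkey i j h).1 (heq ▸ List.prefix_refl _)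
      · exact (hkey j i h).2 (heq ▸ List.prefix_refl _)
    refine ⟨Set.range (fun k => w (N k)), ?_, ?_, ?_⟩
    · rintro x ⟨k, rfl⟩
      exact hvL (N k)
    · exact Set.infinite_range_of_injective (fun i j h => by
        by_contra hij; exact hne i j hij h)
    · rintro u ⟨i, rfl⟩ x ⟨j, rfl⟩ huv
      have hij : i ≠ j := fun h => huv (by rw [h])
      rcases hij.lt_or_gt with h | h
      · exact hkey i j h
      · exact (hkey j i h).symm
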